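/- Fix k > 0 and ρ ∈ (0,1). For (c₁, c₂) ∈ (0,∞) × (0,∞), let (t*(c₁,c₂), p*(c₁,c₂)) denote the unique pair satisfying g_{k,ρ}(ρ·t* − p*) = c₁ and ℋ_{c₁,c₂}(p*, t*) = 0. Then the map (c₁, c₂) ↦ (t*(c₁,c₂), p*(c₁,c₂)) is continuous on (0,∞) × (0,∞). -/

import Mathlib

open MeasureTheory Real Set Filter

/-- Standard normal density. -/
noncomputable def stdPhi (x : ℝ) : ℝ := (Real.sqrt (2 * Real.pi))⁻¹ * Real.exp (-x ^ 2 / 2)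

/-- Standard normal CDF. -/
noncomputable def stdPhiCDF (x : ℝ) : ℝ := ∫ u in Set.Iic x, stdPhi u

/-- Normalized expected-profit function `g_{k,ρ}`. -/
noncomputable def gkr (k ρ x : ℝ) : ℝ :=
  Real.exp (k * x + k ^ 2 * (1 - ρ ^ 2) / 2) *
      stdPhiCDF ((x + k * (1 - ρ ^ 2)) / Real.sqrt (1 - ρ ^ 2)) -
    stdPhiCDF (x / Real.sqrt (1 - ρ ^ 2))

/-- Free-entry residual `ℋ_{c₁,c₂}(p, t)`. -/
noncomputable def FEres (k ρ c₁ c₂ p t : ℝ) : ℝ :=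
  (∫ s in Set.Ici t, gkr k ρ (ρ * s - p) * stdPhi s) - c₁ * stdPhiCDF (-t) - c₂


lemma stdPhi_pos (x : ℝ) : 0 < stdPhi x := by
  apply mul_pos (inv_pos.2 (Real.sqrt_pos.2 (by positivity))) (Real.exp_pos _)

lemma stdPhi_continuous : Continuous stdPhi := by
  unfold stdPhi; fun_prop

lemma stdPhi_integrable : Integrable stdPhi := by
  have h : Integrable (fun x : ℝ => Real.exp (-(1/2) * x ^ 2)) := integrable_exp_neg_mul_sq (by norm_num)
  have := h.const_mul (Real.sqrt (2 * Real.pi))⁻¹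
  refine this.congr (Filter.Eventually.of_forall fun x => ?_)
  simp only [stdPhi]
  rw [show -(1/2:ℝ) * x ^ 2 = -x ^ 2 / 2 by ring]

lemma integrable_exp_mul_stdPhi (a : ℝ) :
    Integrable (fun s : ℝ => Real.exp (a * s) * stdPhi s) := by
  have h : Integrable (fun x : ℝ => Real.exp (-(1/2) * x ^ 2)) := integrable_exp_neg_mul_sq (by norm_num)
  have h2 : Integrable (fun x : ℝ => Real.exp (-(1/2) * (x - a) ^ 2)) := h.comp_sub_right a
  have h3 := (h2.const_mul ((Real.sqrt (2 * Real.pi))⁻¹ * Real.exp (a ^ 2 / 2)))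
  refine h3.congr (Filter.Eventually.of_forall fun x => ?_)
  have key : Real.exp (a * x) * Real.exp (-x ^ 2 / 2) =
      Real.exp (a ^ 2 / 2) * Real.exp (-(1/2) * (x - a) ^ 2) := by
    rw [← Real.exp_add, ← Real.exp_add]; congr 1; ring
  simp only [stdPhi]
  linear_combination (-(Real.sqrt (2 * Real.pi))⁻¹) * key

lemma stdPhiCDF_eq (x : ℝ) : stdPhiCDF x = stdPhiCDF 0 + ∫ u in (0:ℝ)..x, stdPhi u := by
  rw [← intervalIntegral.integral_Iic_sub_Iic stdPhi_integrable.integrableOn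
    stdPhi_integrable.integrableOn]
  simp [stdPhiCDF]

lemma stdPhiCDF_hasDerivAt (x : ℝ) : HasDerivAt stdPhiCDF (stdPhi x) x := by
  have h : HasDerivAt (fun y => stdPhiCDF 0 + ∫ u in (0:ℝ)..y, stdPhi u) (stdPhi x) x := by
    apply HasDerivAt.const_add
    exact intervalIntegral.integral_hasDerivAt_right
      stdPhi_integrable.intervalIntegrable
      (stdPhi_continuous.stronglyMeasurableAtFilter _ _)
      stdPhi_continuous.continuousAt
  exact h.congr_of_eventuallyEq (Filter.Eventually.of_forall fun y => stdPhiCDF_eq y)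

lemma stdPhiCDF_continuous : Continuous stdPhiCDF := by
  have : Differentiable ℝ stdPhiCDF := fun x => (stdPhiCDF_hasDerivAt x).differentiableAt
  exact this.continuous

lemma stdPhiCDF_nonneg (x : ℝ) : 0 ≤ stdPhiCDF x :=
  setIntegral_nonneg measurableSet_Iic fun u _ => (stdPhi_pos u).le

lemma stdPhiCDF_le_one (x : ℝ) : stdPhiCDF x ≤ 1 := by
  have h1 : stdPhiCDF x ≤ ∫ u, stdPhi u := by
    apply setIntegral_le_integral stdPhi_integrable
      (Filter.Eventually.of_forall fun u => (stdPhi_pos u).le)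
  have h2 : ∫ u, stdPhi u = 1 := by
    simp only [stdPhi]
    rw [MeasureTheory.integral_const_mul]
    have h3 : (fun u : ℝ => Real.exp (-u ^ 2 / 2)) = fun u : ℝ => Real.exp (-(1/2) * u ^ 2) := by
      funext u; ring_nf
    rw [h3, integral_gaussian, show Real.pi / (1/2) = 2 * Real.pi by ring]
    exact inv_mul_cancel₀ (by positivity)
  linarith [h1, h2.le]

lemma stdPhiCDF_pos (x : ℝ) : 0 < stdPhiCDF x := by
  rw [stdPhiCDF, setIntegral_pos_iff_support_of_nonneg_ae
    (Filter.Eventually.of_forall fun u => (stdPhi_pos u).le) stdPhi_integrable.integrableOn]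
  have : Function.support stdPhi ∩ Iic x = Iic x := by
    rw [inter_eq_right]
    intro u _
    exact (stdPhi_pos u).ne'
  rw [this]
  simp [Real.volume_Iic]

noncomputable def gkr' (k ρ x : ℝ) : ℝ :=
  Real.exp (k * x + k ^ 2 * (1 - ρ ^ 2) / 2) *
      stdPhiCDF ((x + k * (1 - ρ ^ 2)) / Real.sqrt (1 - ρ ^ 2))

section gkrlemmas

variable {k ρ : ℝ}

lemma phi_ident (hρ : ρ ∈ Set.Ioo (0 : ℝ) 1) (x : ℝ) :
    Real.exp (k * x + k ^ 2 * (1 - ρ ^ 2) / 2) *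
      stdPhi ((x + k * (1 - ρ ^ 2)) / Real.sqrt (1 - ρ ^ 2)) =
    stdPhi (x / Real.sqrt (1 - ρ ^ 2)) := by
  obtain ⟨h1, h2⟩ := hρ
  have hB : (0:ℝ) < 1 - ρ ^ 2 := by nlinarith
  have hs : Real.sqrt (1 - ρ ^ 2) ^ 2 = 1 - ρ ^ 2 := Real.sq_sqrt hB.le
  have hs0 : Real.sqrt (1 - ρ ^ 2) ≠ 0 := by positivity
  simp only [stdPhi]
  rw [show ∀ u v w : ℝ, u * (v * w) = v * (u * w) from fun _ _ _ => by ring,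
    ← Real.exp_add]
  congr 2
  rw [div_pow, div_pow, hs]
  field_simp
  ring

lemma gkr_hasDerivAt (hρ : ρ ∈ Set.Ioo (0 : ℝ) 1) (x : ℝ) :
    HasDerivAt (gkr k ρ) (k * gkr' k ρ x) x := by
  obtain ⟨h1, h2⟩ := hρ
  have hB : (0:ℝ) < 1 - ρ ^ 2 := by nlinarith
  have hs0 : Real.sqrt (1 - ρ ^ 2) ≠ 0 := by positivity
  set σ := Real.sqrt (1 - ρ ^ 2) with hσ
  have hexp : HasDerivAt (fun x : ℝ => Real.exp (k * x + k ^ 2 * (1 - ρ ^ 2) / 2))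
      (k * Real.exp (k * x + k ^ 2 * (1 - ρ ^ 2) / 2)) x := by
    have hlin : HasDerivAt (fun x : ℝ => k * x + k ^ 2 * (1 - ρ ^ 2) / 2) k x := by
      simpa using ((hasDerivAt_id x).const_mul k).add_const (k ^ 2 * (1 - ρ ^ 2) / 2)
    simpa [mul_comm] using hlin.exp
  have harg1 : HasDerivAt (fun x : ℝ => (x + k * (1 - ρ ^ 2)) / σ) (1/σ) x := by
    simpa using ((hasDerivAt_id x).add_const (k * (1 - ρ ^ 2))).div_const σ
  have hΦ1 : HasDerivAt (fun x : ℝ => stdPhiCDF ((x + k * (1 - ρ ^ 2)) / σ))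
      (stdPhi ((x + k * (1 - ρ ^ 2)) / σ) * (1/σ)) x :=
    (stdPhiCDF_hasDerivAt _).comp x harg1
  have harg2 : HasDerivAt (fun x : ℝ => x / σ) (1/σ) x := by
    simpa using (hasDerivAt_id x).div_const σ
  have hΦ2 : HasDerivAt (fun x : ℝ => stdPhiCDF (x / σ)) (stdPhi (x / σ) * (1/σ)) x :=
    (stdPhiCDF_hasDerivAt _).comp x harg2
  have hmul := hexp.mul hΦ1
  have htot := hmul.sub hΦ2
  have : gkr k ρ = fun x : ℝ =>
      Real.exp (k * x + k ^ 2 * (1 - ρ ^ 2) / 2) * stdPhiCDF ((x + k * (1 - ρ ^ 2)) / σ) -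
        stdPhiCDF (x / σ) := by
    funext y; rfl
  rw [this]
  refine htot.congr_deriv ?_
  have hid := phi_ident (k := k) ⟨h1, h2⟩ x
  show _ = k * (Real.exp (k * x + k ^ 2 * (1 - ρ ^ 2) / 2) * stdPhiCDF ((x + k * (1 - ρ ^ 2)) / σ))
  have : Real.exp (k * x + k ^ 2 * (1 - ρ ^ 2) / 2) *
      (stdPhi ((x + k * (1 - ρ ^ 2)) / σ) * (1/σ)) = stdPhi (x / σ) * (1/σ) := by
    rw [← mul_assoc, hid]
  linarith [this]

lemma gkr_strictMono (hk : 0 < k) (hρ : ρ ∈ Set.Ioo (0 : ℝ) 1) : StrictMono (gkr k ρ) := by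
  apply strictMono_of_deriv_pos
  intro x
  rw [(gkr_hasDerivAt hρ x).deriv]
  exact mul_pos hk (mul_pos (Real.exp_pos _) (stdPhiCDF_pos _))

lemma gkr_continuous : Continuous (gkr k ρ) := by
  unfold gkr
  have := stdPhiCDF_continuous
  fun_prop

lemma gkr_abs_le (x : ℝ) :
    |gkr k ρ x| ≤ Real.exp (k * x + k ^ 2 * (1 - ρ ^ 2) / 2) + 1 := by
  rw [gkr]
  refine (abs_sub _ _).trans ?_
  gcongr
  · rw [abs_mul, abs_of_nonneg (Real.exp_pos _).le, abs_of_nonneg (stdPhiCDF_nonneg _)]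
    exact mul_le_of_le_one_right (Real.exp_pos _).le (stdPhiCDF_le_one _)
  · rw [abs_of_nonneg (stdPhiCDF_nonneg _)]
    exact stdPhiCDF_le_one _

end gkrlemmas

section psi

variable {k ρ : ℝ}

lemma integrable_gkr_mul (hk : 0 < k) (hρ : ρ ∈ Set.Ioo (0 : ℝ) 1) (p : ℝ) :
    Integrable (fun s : ℝ => gkr k ρ (ρ * s - p) * stdPhi s) := by
  set A := k ^ 2 * (1 - ρ ^ 2) / 2 with hA
  have hbd : Integrable (fun s : ℝ =>
      Real.exp (k * (-p) + A) * (Real.exp (k * ρ * s) * stdPhi s) + stdPhi s) :=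
    ((integrable_exp_mul_stdPhi (k * ρ)).const_mul _).add stdPhi_integrable
  refine hbd.mono ?_ (Filter.Eventually.of_forall fun s => ?_)
  · exact ((gkr_continuous.comp (by fun_prop)).mul stdPhi_continuous).aestronglyMeasurable
  · have h1 : |gkr k ρ (ρ * s - p) * stdPhi s| ≤
        (Real.exp (k * (ρ * s - p) + A) + 1) * stdPhi s := by
      rw [abs_mul, abs_of_nonneg (stdPhi_pos s).le]
      exact mul_le_mul_of_nonneg_right (gkr_abs_le _) (stdPhi_pos s).le
    have h2 : (Real.exp (k * (ρ * s - p) + A) + 1) * stdPhi s =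
        Real.exp (k * (-p) + A) * (Real.exp (k * ρ * s) * stdPhi s) + stdPhi s := by
      rw [show k * (ρ * s - p) + A = (k * (-p) + A) + k * ρ * s by ring, Real.exp_add]
      ring
    rw [Real.norm_eq_abs, Real.norm_eq_abs]
    refine (h1.trans_eq h2).trans (le_abs_self _)

lemma stdPhiCDF_neg (t : ℝ) : stdPhiCDF (-t) = ∫ s in Set.Ioi t, stdPhi s := by
  rw [stdPhiCDF, show Set.Ioi t = Set.Ioi (-(-t)) by rw [neg_neg]]
  rw [← integral_comp_neg_Iic]
  congr 1
  funext u
  simp [stdPhi]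

/-- The free-entry value along the curve `p = ρ t - x`. -/
noncomputable def Psi (k ρ x t : ℝ) : ℝ :=
  (∫ s in Set.Ici t, gkr k ρ (ρ * s - (ρ * t - x)) * stdPhi s) -
    gkr k ρ x * stdPhiCDF (-t)

lemma Psi_strictAnti (hk : 0 < k) (hρ : ρ ∈ Set.Ioo (0 : ℝ) 1) (x : ℝ) :
    StrictAnti (Psi k ρ x) := by
  intro t t' htt'
  have hint : ∀ τ : ℝ, Integrable (fun s : ℝ => gkr k ρ (ρ * s - (ρ * τ - x)) * stdPhi s) :=
    fun τ => integrable_gkr_mul hk hρ _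
  have hsplit : ∀ τ : ℝ, (∫ s in Set.Ici t, gkr k ρ (ρ * s - (ρ * τ - x)) * stdPhi s) =
      (∫ s in Set.Ioc t t', gkr k ρ (ρ * s - (ρ * τ - x)) * stdPhi s) +
      ∫ s in Set.Ioi t', gkr k ρ (ρ * s - (ρ * τ - x)) * stdPhi s := by
    intro τ
    rw [MeasureTheory.integral_Ici_eq_integral_Ioi,
      ← Set.Ioc_union_Ioi_eq_Ioi htt'.le,
      MeasureTheory.setIntegral_union (Set.Ioc_disjoint_Ioi le_rfl) measurableSet_Ioi
        (hint τ).integrableOn (hint τ).integrableOn]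
  have hphisplit : stdPhiCDF (-t) - stdPhiCDF (-t') = ∫ s in Set.Ioc t t', stdPhi s := by
    rw [stdPhiCDF_neg, stdPhiCDF_neg, ← Set.Ioc_union_Ioi_eq_Ioi htt'.le,
      MeasureTheory.setIntegral_union (Set.Ioc_disjoint_Ioi le_rfl) measurableSet_Ioi
        stdPhi_integrable.integrableOn stdPhi_integrable.integrableOn]
    ring
  -- Step A : strict inequality on the middle piece
  have hA : gkr k ρ x * ∫ s in Set.Ioc t t', stdPhi s <
      ∫ s in Set.Ioc t t', gkr k ρ (ρ * s - (ρ * t - x)) * stdPhi s := by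
    have hpos : 0 < ∫ s in Set.Ioc t t',
        (gkr k ρ (ρ * s - (ρ * t - x)) - gkr k ρ x) * stdPhi s := by
      rw [MeasureTheory.setIntegral_pos_iff_support_of_nonneg_ae]
      · have hsub : Set.Ioc t t' ⊆ Function.support
            (fun s => (gkr k ρ (ρ * s - (ρ * t - x)) - gkr k ρ x) * stdPhi s) := by
          intro s hs
          have harg : x < ρ * s - (ρ * t - x) := by nlinarith [hρ.1, hs.1]
          have := gkr_strictMono hk hρ harg
          exact (mul_pos (by linarith) (stdPhi_pos s)).ne'
        calc (0:ENNReal) < volume (Set.Ioc t t') := by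
              simp [Real.volume_Ioc, htt']
          _ ≤ volume (Function.support _ ∩ Set.Ioc t t') := by
              rw [Set.inter_eq_right.mpr hsub]
      · filter_upwards [MeasureTheory.ae_restrict_mem measurableSet_Ioc] with s hs
        have harg : x ≤ ρ * s - (ρ * t - x) := by nlinarith [hρ.1.le, hs.1.le]
        have := (gkr_strictMono hk hρ).monotone harg
        exact mul_nonneg (by linarith) (stdPhi_pos s).le
      · exact (((hint t).sub (stdPhi_integrable.const_mul (gkr k ρ x))).congr
          (Filter.Eventually.of_forall fun s => by simp only [Pi.sub_apply]; ring)).integrableOn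
    have heq : ∫ s in Set.Ioc t t',
        (gkr k ρ (ρ * s - (ρ * t - x)) - gkr k ρ x) * stdPhi s =
        (∫ s in Set.Ioc t t', gkr k ρ (ρ * s - (ρ * t - x)) * stdPhi s) -
        gkr k ρ x * ∫ s in Set.Ioc t t', stdPhi s := by
      rw [← MeasureTheory.integral_const_mul, ← MeasureTheory.integral_sub
        (hint t).integrableOn ((stdPhi_integrable.const_mul (gkr k ρ x)).integrableOn)]
      congr 1; funext s; ring
    rw [heq] at hpos
    linarith
  -- Step B : monotone comparison on the tail
  have hB : ∫ s in Set.Ioi t', gkr k ρ (ρ * s - (ρ * t' - x)) * stdPhi s ≤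
      ∫ s in Set.Ioi t', gkr k ρ (ρ * s - (ρ * t - x)) * stdPhi s := by
    refine MeasureTheory.setIntegral_mono_on (hint t').integrableOn (hint t).integrableOn
      measurableSet_Ioi fun s _ => ?_
    have harg : ρ * s - (ρ * t' - x) ≤ ρ * s - (ρ * t - x) := by nlinarith [hρ.1.le]
    exact mul_le_mul_of_nonneg_right ((gkr_strictMono hk hρ).monotone harg) (stdPhi_pos s).le
  -- assemble
  simp only [Psi]
  have h1 := hsplit t
  have h2 : (∫ s in Set.Ici t', gkr k ρ (ρ * s - (ρ * t' - x)) * stdPhi s) =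
      ∫ s in Set.Ioi t', gkr k ρ (ρ * s - (ρ * t' - x)) * stdPhi s :=
    MeasureTheory.integral_Ici_eq_integral_Ioi
  rw [h1, h2]
  have hphi2 : gkr k ρ x * stdPhiCDF (-t) - gkr k ρ x * stdPhiCDF (-t') =
      gkr k ρ x * ∫ s in Set.Ioc t t', stdPhi s := by
    rw [← mul_sub, hphisplit]
  linarith

end psi

lemma Psi_continuousAt_param {k ρ : ℝ} (hk : 0 < k) (hρ : ρ ∈ Set.Ioo (0 : ℝ) 1)
    (b x₀ : ℝ) : ContinuousAt (fun x : ℝ => Psi k ρ x b) x₀ := by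
  have hcont_int : ContinuousAt
      (fun x : ℝ => ∫ s in Set.Ici b, gkr k ρ (ρ * s - (ρ * b - x)) * stdPhi s) x₀ := by
    set A := k ^ 2 * (1 - ρ ^ 2) / 2 with hA
    set bound : ℝ → ℝ := fun s =>
      Real.exp (k * (x₀ + 1 - ρ * b) + A) * (Real.exp (k * ρ * s) * stdPhi s) + stdPhi s
      with hbound
    apply MeasureTheory.continuousAt_of_dominated (bound := bound)
    · refine Filter.Eventually.of_forall fun x => ?_
      exact ((gkr_continuous.comp (by fun_prop)).mul stdPhi_continuous).aestronglyMeasurable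
    · have hball : ∀ᶠ x : ℝ in nhds x₀, x ∈ Set.Ioo (x₀ - 1) (x₀ + 1) :=
        Ioo_mem_nhds (by linarith) (by linarith)
      refine hball.mono fun x hx => Filter.Eventually.of_forall fun s => ?_
      have h1 : |gkr k ρ (ρ * s - (ρ * b - x)) * stdPhi s| ≤
          (Real.exp (k * (ρ * s - (ρ * b - x)) + A) + 1) * stdPhi s := by
        rw [abs_mul, abs_of_nonneg (stdPhi_pos s).le]
        exact mul_le_mul_of_nonneg_right (gkr_abs_le _) (stdPhi_pos s).le
      have h2 : (Real.exp (k * (ρ * s - (ρ * b - x)) + A) + 1) * stdPhi s ≤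
          Real.exp (k * (x₀ + 1 - ρ * b) + A) * (Real.exp (k * ρ * s) * stdPhi s) + stdPhi s := by
        have hexp : Real.exp (k * (ρ * s - (ρ * b - x)) + A) ≤
            Real.exp (k * (x₀ + 1 - ρ * b) + A) * Real.exp (k * ρ * s) := by
          rw [← Real.exp_add]
          apply Real.exp_le_exp.2
          nlinarith [hx.2]
        nlinarith [stdPhi_pos s, hexp, Real.exp_pos (k * (ρ * s - (ρ * b - x)) + A)]
      rw [Real.norm_eq_abs]
      exact h1.trans h2
    · exact (((integrable_exp_mul_stdPhi (k * ρ)).const_mul _).add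
        stdPhi_integrable).integrableOn
    · refine Filter.Eventually.of_forall fun s => ?_
      have : Continuous (fun x : ℝ => gkr k ρ (ρ * s - (ρ * b - x)) * stdPhi s) :=
        (gkr_continuous.comp (by fun_prop)).mul continuous_const
      exact this.continuousAt
  have hcont2 : ContinuousAt (fun x : ℝ => gkr k ρ x * stdPhiCDF (-b)) x₀ :=
    (gkr_continuous.mul continuous_const).continuousAt
  exact hcont_int.sub hcont2

theorem equilibrium_continuous_in_costs
    (k ρ : ℝ) (hk : 0 < k) (hρ : ρ ∈ Set.Ioo (0 : ℝ) 1)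
    (sol : ℝ × ℝ → ℝ × ℝ)
    (hsol : ∀ c : ℝ × ℝ, c ∈ Set.Ioi (0 : ℝ) ×ˢ Set.Ioi (0 : ℝ) →
      (gkr k ρ (ρ * (sol c).1 - (sol c).2) = c.1 ∧
        FEres k ρ c.1 c.2 (sol c).2 (sol c).1 = 0) ∧
      (∀ t p : ℝ, gkr k ρ (ρ * t - p) = c.1 → FEres k ρ c.1 c.2 p t = 0 →
        (t, p) = sol c)) :
    ContinuousOn sol (Set.Ioi (0 : ℝ) ×ˢ Set.Ioi (0 : ℝ)) := by
  intro c hc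
  set S := Set.Ioi (0:ℝ) ×ˢ Set.Ioi (0:ℝ) with hS
  set xf : ℝ × ℝ → ℝ := fun c' => ρ * (sol c').1 - (sol c').2 with hxf
  have hg : ∀ c' ∈ S, gkr k ρ (xf c') = c'.1 := fun c' hc' => (hsol c' hc').1.1
  have hPsi : ∀ c' ∈ S, Psi k ρ (xf c') (sol c').1 = c'.2 := by
    intro c' hc'
    have h2 := (hsol c' hc').1.2
    rw [FEres] at h2
    rw [Psi, hg c' hc', show ρ * (sol c').1 - xf c' = (sol c').2 by rw [hxf]; ring]
    linarith
  have hmemS : ∀ᶠ c' in nhdsWithin c S, c' ∈ S := eventually_mem_nhdsWithin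
  have hc1 : Filter.Tendsto (fun c' : ℝ × ℝ => c'.1) (nhdsWithin c S) (nhds c.1) :=
    (continuous_fst.tendsto c).mono_left nhdsWithin_le_nhds
  have hc2 : Filter.Tendsto (fun c' : ℝ × ℝ => c'.2) (nhdsWithin c S) (nhds c.2) :=
    (continuous_snd.tendsto c).mono_left nhdsWithin_le_nhds
  have hx0 : gkr k ρ (xf c) = c.1 := hg c hc
  -- Step 1: convergence of `xf`
  have hxt : Filter.Tendsto xf (nhdsWithin c S) (nhds (xf c)) := by
    rw [tendsto_order]
    constructor
    · intro b hb
      have hgb : gkr k ρ b < c.1 := hx0 ▸ gkr_strictMono hk hρ hb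
      filter_upwards [hmemS, hc1.eventually_const_lt hgb] with c' hc'S hlt
      refine (gkr_strictMono hk hρ).lt_iff_lt.mp ?_
      rw [hg c' hc'S]; exact hlt
    · intro b hb
      have hgb : c.1 < gkr k ρ b := hx0 ▸ gkr_strictMono hk hρ hb
      filter_upwards [hmemS, hc1.eventually_lt_const hgb] with c' hc'S hlt
      refine (gkr_strictMono hk hρ).lt_iff_lt.mp ?_
      rw [hg c' hc'S]; exact hlt
  -- Step 2: convergence of the threshold `t`
  have hPsic : Psi k ρ (xf c) (sol c).1 = c.2 := hPsi c hc
  have htt : Filter.Tendsto (fun c' => (sol c').1) (nhdsWithin c S) (nhds (sol c).1) := by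
    rw [tendsto_order]
    constructor
    · intro b hb
      have hPb : c.2 < Psi k ρ (xf c) b := by
        have := Psi_strictAnti hk hρ (xf c) hb
        linarith
      have htend : Filter.Tendsto (fun c' => Psi k ρ (xf c') b) (nhdsWithin c S)
          (nhds (Psi k ρ (xf c) b)) :=
        (Psi_continuousAt_param hk hρ b (xf c)).tendsto.comp hxt
      filter_upwards [hmemS, hc2.eventually_lt htend hPb] with c' hc'S hlt
      refine (Psi_strictAnti hk hρ (xf c')).lt_iff_gt.mp ?_
      rw [hPsi c' hc'S]; exact hlt
    · intro b hb
      have hPb : Psi k ρ (xf c) b < c.2 := by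
        have := Psi_strictAnti hk hρ (xf c) hb
        linarith
      have htend : Filter.Tendsto (fun c' => Psi k ρ (xf c') b) (nhdsWithin c S)
          (nhds (Psi k ρ (xf c) b)) :=
        (Psi_continuousAt_param hk hρ b (xf c)).tendsto.comp hxt
      filter_upwards [hmemS, htend.eventually_lt hc2 hPb] with c' hc'S hlt
      refine (Psi_strictAnti hk hρ (xf c')).lt_iff_gt.mp ?_
      rw [hPsi c' hc'S]; exact hlt
  -- Step 3: convergence of the price `p`
  have hpt : Filter.Tendsto (fun c' => (sol c').2) (nhdsWithin c S) (nhds (sol c).2) := by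
    have hfun : (fun c' : ℝ × ℝ => (sol c').2) = fun c' => ρ * (sol c').1 - xf c' := by
      funext c'; rw [hxf]; ring
    have h := (htt.const_mul ρ).sub hxt
    rw [show ρ * (sol c).1 - xf c = (sol c).2 by rw [hxf]; ring] at h
    rw [hfun]
    exact h
  exact htt.prodMk_nhds hpt
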